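/- arXiv:1103.0194 — 4 statements merged into one kernel-verified Lean document; each statement's English description precedes it below -/
import Mathlib

section
/- Let A be a symmetric positive semi-definite d×d real matrix that is not zero, and let H be a symmetric positive definite d×d matrix. Let q₊(A) denote the smallest positive eigenvalue of A and m(H) the smallest eigenvalue of H. Then for every vector v, ⟨A H A v, v⟩ ≥ m(H) · q₊(A) · ⟨A v, v⟩. -/
open Matrix

lemma dotstar {d : ℕ} (M : Matrix (Fin d) (Fin d) ℝ) (x y : Fin d → ℝ) :
    (M *ᵥ x) ⬝ᵥ y = x ⬝ᵥ (star M *ᵥ y) := by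
  rw [dotProduct_comm, dotProduct_mulVec, star_eq_conjTranspose]
  simp [Matrix.mulVec_transpose, dotProduct_comm]

lemma quad_eq {d : ℕ} {M : Matrix (Fin d) (Fin d) ℝ} (hM : M.IsHermitian) (v : Fin d → ℝ) :
    (M *ᵥ v) ⬝ᵥ v
      = ∑ i, hM.eigenvalues i *
          ((star (hM.eigenvectorUnitary : Matrix (Fin d) (Fin d) ℝ) *ᵥ v) i) ^ 2 := by
  set U : Matrix (Fin d) (Fin d) ℝ := (hM.eigenvectorUnitary : Matrix (Fin d) (Fin d) ℝ) with hU
  set x := star U *ᵥ v with hx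
  conv_lhs => rw [hM.spectral_theorem, Unitary.conjStarAlgAut_apply]
  rw [← Matrix.mulVec_mulVec, ← Matrix.mulVec_mulVec, dotstar]
  simp only [← hU, ← hx, Matrix.mulVec_diagonal, dotProduct, Function.comp_apply,
    RCLike.ofReal_real_eq_id, id_eq]
  refine Finset.sum_congr rfl fun i _ => ?_
  ring

lemma normsq_eq {d : ℕ} {M : Matrix (Fin d) (Fin d) ℝ} (hM : M.IsHermitian) (v : Fin d → ℝ) :
    (M *ᵥ v) ⬝ᵥ (M *ᵥ v)
      = ∑ i, hM.eigenvalues i ^ 2 *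
          ((star (hM.eigenvectorUnitary : Matrix (Fin d) (Fin d) ℝ) *ᵥ v) i) ^ 2 := by
  set U : Matrix (Fin d) (Fin d) ℝ := (hM.eigenvectorUnitary : Matrix (Fin d) (Fin d) ℝ) with hU
  set x := star U *ᵥ v with hx
  have hMv : M *ᵥ v = U *ᵥ (diagonal (RCLike.ofReal ∘ hM.eigenvalues) *ᵥ x) := by
    conv_lhs => rw [hM.spectral_theorem, Unitary.conjStarAlgAut_apply]
    rw [← Matrix.mulVec_mulVec, ← Matrix.mulVec_mulVec]
  have cancel : ∀ a : Fin d → ℝ, star U *ᵥ (U *ᵥ a) = a := fun a => by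
    rw [Matrix.mulVec_mulVec, hU, Matrix.mem_unitaryGroup_iff'.mp hM.eigenvectorUnitary.2,
      Matrix.one_mulVec]
  rw [hMv, dotstar, cancel]
  simp only [Matrix.mulVec_diagonal, dotProduct, Function.comp_apply,
    RCLike.ofReal_real_eq_id, id_eq]
  refine Finset.sum_congr rfl fun i _ => ?_
  ring

lemma norm_pres {d : ℕ} (U : Matrix.unitaryGroup (Fin d) ℝ) (v : Fin d → ℝ) :
    (star (U : Matrix (Fin d) (Fin d) ℝ) *ᵥ v) ⬝ᵥ (star (U : Matrix (Fin d) (Fin d) ℝ) *ᵥ v)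
      = v ⬝ᵥ v := by
  rw [dotstar, Matrix.mulVec_mulVec, star_star,
    Matrix.mem_unitaryGroup_iff.mp U.2, Matrix.one_mulVec]

lemma eig_set_eq {d : ℕ} {M : Matrix (Fin d) (Fin d) ℝ} (hM : M.IsHermitian) :
    {r : ℝ | Module.End.HasEigenvalue M.mulVecLin r} = Set.range hM.eigenvalues := by
  ext r
  rw [Set.mem_setOf_eq, Module.End.hasEigenvalue_iff_mem_spectrum,
    ← Matrix.toLin'_apply',
    show Matrix.toLin' M = Matrix.toLinAlgEquiv' M from rfl,
    AlgEquiv.spectrum_eq Matrix.toLinAlgEquiv' M, hM.spectrum_real_eq_range_eigenvalues]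

/-- The smallest eigenvalue of a matrix. -/
noncomputable def minEig {d : ℕ} (M : Matrix (Fin d) (Fin d) ℝ) : ℝ :=
  sInf {r : ℝ | Module.End.HasEigenvalue M.mulVecLin r}

/-- The smallest positive eigenvalue of a matrix. -/
noncomputable def minPosEig {d : ℕ} (M : Matrix (Fin d) (Fin d) ℝ) : ℝ :=
  sInf {r : ℝ | 0 < r ∧ Module.End.HasEigenvalue M.mulVecLin r}

theorem quad_AHA_ge {d : ℕ} (A H : Matrix (Fin d) (Fin d) ℝ)
    (hA : A.PosSemidef) (hA0 : A ≠ 0) (hH : H.PosDef) (v : Fin d → ℝ) :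
    (A * H * A).mulVec v ⬝ᵥ v ≥ minEig H * minPosEig A * (A.mulVec v ⬝ᵥ v) := by
  rcases Nat.eq_zero_or_pos d with hd | hd
  · subst hd
    exact absurd (by ext i j; exact i.elim0) hA0
  have : NeZero d := ⟨hd.ne'⟩
  have hAH : A.IsHermitian := hA.1
  have hHH : H.IsHermitian := hH.1
  -- facts about minEig H
  have hTH : {r : ℝ | Module.End.HasEigenvalue H.mulVecLin r} = Set.range hHH.eigenvalues :=
    eig_set_eq hHH
  have hTfin : ({r : ℝ | Module.End.HasEigenvalue H.mulVecLin r}).Finite := by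
    rw [hTH]; exact Set.finite_range _
  have hTne : ({r : ℝ | Module.End.HasEigenvalue H.mulVecLin r}).Nonempty := by
    rw [hTH]; exact Set.range_nonempty _
  have hm_mem : minEig H ∈ {r : ℝ | Module.End.HasEigenvalue H.mulVecLin r} :=
    hTne.csInf_mem hTfin
  have hm_pos : 0 < minEig H := by
    obtain ⟨j, hj⟩ := hTH ▸ hm_mem
    rw [← hj]; exact hH.eigenvalues_pos j
  have hm_le : ∀ j, minEig H ≤ hHH.eigenvalues j := fun j =>
    csInf_le hTfin.bddBelow (hTH ▸ Set.mem_range_self j)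
  -- facts about minPosEig A
  have hSA : {r : ℝ | 0 < r ∧ Module.End.HasEigenvalue A.mulVecLin r}
      = {r ∈ Set.range hAH.eigenvalues | 0 < r} := by
    ext r
    simp only [Set.mem_setOf_eq, ← eig_set_eq hAH, Set.mem_setOf_eq, and_comm]
  have hSfin : ({r : ℝ | 0 < r ∧ Module.End.HasEigenvalue A.mulVecLin r}).Finite := by
    rw [hSA]; exact (Set.finite_range _).subset (Set.sep_subset _ _)
  have hex : ∃ i, 0 < hAH.eigenvalues i := by
    by_contra hcon
    push_neg at hcon
    have hzero : ∀ i, hAH.eigenvalues i = 0 := fun i =>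
      le_antisymm (hcon i) (hA.eigenvalues_nonneg i)
    apply hA0
    have := hAH.spectral_theorem
    rw [this]
    have : diagonal (RCLike.ofReal ∘ hAH.eigenvalues) = (0 : Matrix (Fin d) (Fin d) ℝ) := by
      ext i j
      simp [diagonal, hzero]
    rw [this, Unitary.conjStarAlgAut_apply, Matrix.mul_zero, Matrix.zero_mul]
  have hSne : ({r : ℝ | 0 < r ∧ Module.End.HasEigenvalue A.mulVecLin r}).Nonempty := by
    obtain ⟨i, hi⟩ := hex
    rw [hSA]
    exact ⟨hAH.eigenvalues i, Set.mem_range_self i, hi⟩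
  have hc_mem := hSne.csInf_mem hSfin
  have hc_pos : 0 < minPosEig A := hc_mem.1
  have hc_le : ∀ i, 0 < hAH.eigenvalues i → minPosEig A ≤ hAH.eigenvalues i := fun i hi =>
    csInf_le hSfin.bddBelow (by rw [hSA]; exact ⟨Set.mem_range_self i, hi⟩)
  -- quadratic form manipulations
  set w := A *ᵥ v with hw
  have hlhs : (A * H * A) *ᵥ v ⬝ᵥ v = (H *ᵥ w) ⬝ᵥ w := by
    rw [← Matrix.mulVec_mulVec, ← Matrix.mulVec_mulVec, dotstar,
      show star A = A from hAH]
  set x := star (hAH.eigenvectorUnitary : Matrix (Fin d) (Fin d) ℝ) *ᵥ v with hx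
  have hquadA : (A *ᵥ v) ⬝ᵥ v = ∑ i, hAH.eigenvalues i * (x i) ^ 2 := quad_eq hAH v
  have hww : w ⬝ᵥ w = ∑ i, hAH.eigenvalues i ^ 2 * (x i) ^ 2 := normsq_eq hAH v
  set y := star (hHH.eigenvectorUnitary : Matrix (Fin d) (Fin d) ℝ) *ᵥ w with hy
  have hquadH : (H *ᵥ w) ⬝ᵥ w = ∑ j, hHH.eigenvalues j * (y j) ^ 2 := quad_eq hHH w
  have hwwy : w ⬝ᵥ w = ∑ j, (y j) ^ 2 := by
    rw [← norm_pres hHH.eigenvectorUnitary w, ← hy]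
    simp [dotProduct, sq]
  -- step 1 : (H w) ⬝ w ≥ m * (w ⬝ w)
  have step1 : (H *ᵥ w) ⬝ᵥ w ≥ minEig H * (w ⬝ᵥ w) := by
    rw [hquadH, hwwy, Finset.mul_sum]
    exact Finset.sum_le_sum fun j _ =>
      mul_le_mul_of_nonneg_right (hm_le j) (sq_nonneg _)
  -- step 2 : w ⬝ w ≥ c * ((A v) ⬝ v)
  have step2 : w ⬝ᵥ w ≥ minPosEig A * ((A *ᵥ v) ⬝ᵥ v) := by
    rw [hww, hquadA, Finset.mul_sum]
    refine Finset.sum_le_sum fun i _ => ?_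
    rcases (hA.eigenvalues_nonneg i).eq_or_lt with h0 | hpos
    · rw [← h0]; simp
    · rw [← mul_assoc]
      exact mul_le_mul_of_nonneg_right
        (by nlinarith [hc_le i hpos]) (sq_nonneg _)
  calc (A * H * A) *ᵥ v ⬝ᵥ v = (H *ᵥ w) ⬝ᵥ w := hlhs
    _ ≥ minEig H * (w ⬝ᵥ w) := step1
    _ ≥ minEig H * (minPosEig A * ((A *ᵥ v) ⬝ᵥ v)) :=
        mul_le_mul_of_nonneg_left step2 hm_pos.le
    _ = minEig H * minPosEig A * ((A *ᵥ v) ⬝ᵥ v) := by ring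
end

section
/- Let H_pp, H_qp, H_qq : ℝ → Matrix(d,d,ℝ) be continuous curves of matrices with H_pp(t), H_qq(t) symmetric, and suppose the symmetric matrix curves 𝕌(t) and 𝕊(t) both satisfy the matrix Riccati equation Ġ + G·H_pp·G + G·H_qp + ᵀH_qp·G + H_qq = 0. If δq(t) solves δq̇ = (H_qp + H_pp·𝕌)·δq, then d/dt ⟨(𝕌(t) − 𝕊(t)) δq(t), δq(t)⟩ = ⟨H_pp(t)(𝕌(t) − 𝕊(t)) δq(t), (𝕌(t) − 𝕊(t)) δq(t)⟩; in particular this derivative is nonnegative when H_pp(t) is positive semi-definite. -/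
open Matrix

private lemma quadform_eq {d : ℕ} (M N : Matrix (Fin d) (Fin d) ℝ) (v : Fin d → ℝ) :
    (M *ᵥ v) ⬝ᵥ (N *ᵥ v) = ((Nᵀ * M) *ᵥ v) ⬝ᵥ v := by
  rw [dotProduct_mulVec, ← Matrix.mulVec_transpose, Matrix.mulVec_mulVec]

theorem riccati_monotonicity {d : ℕ}
    (Hpp Hqp Hqq U S U' S' : ℝ → Matrix (Fin d) (Fin d) ℝ)
    (δq : ℝ → Fin d → ℝ)
    (hHppc : ∀ i j, Continuous fun t => Hpp t i j)
    (hHqpc : ∀ i j, Continuous fun t => Hqp t i j)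
    (hHqqc : ∀ i j, Continuous fun t => Hqq t i j)
    (hHppsymm : ∀ t, (Hpp t).IsSymm) (hHqqsymm : ∀ t, (Hqq t).IsSymm)
    (hUsymm : ∀ t, (U t).IsSymm) (hSsymm : ∀ t, (S t).IsSymm)
    (hU' : ∀ t i j, HasDerivAt (fun s => U s i j) (U' t i j) t)
    (hS' : ∀ t i j, HasDerivAt (fun s => S s i j) (S' t i j) t)
    (hUric : ∀ t, U' t + U t * Hpp t * U t + U t * Hqp t + (Hqp t)ᵀ * U t + Hqq t = 0)
    (hSric : ∀ t, S' t + S t * Hpp t * S t + S t * Hqp t + (Hqp t)ᵀ * S t + Hqq t = 0)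
    (hδq : ∀ t, HasDerivAt δq ((Hqp t + Hpp t * U t).mulVec (δq t)) t) :
    ∀ t : ℝ,
      HasDerivAt (fun s => (U s - S s).mulVec (δq s) ⬝ᵥ δq s)
        ((Hpp t).mulVec ((U t - S t).mulVec (δq t)) ⬝ᵥ (U t - S t).mulVec (δq t)) t ∧
      ((Hpp t).PosSemidef →
        0 ≤ (Hpp t).mulVec ((U t - S t).mulVec (δq t)) ⬝ᵥ (U t - S t).mulVec (δq t)) := by
  intro t
  set v := δq t with hv
  set W : Matrix (Fin d) (Fin d) ℝ := U t - S t with hWdef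
  set A : Matrix (Fin d) (Fin d) ℝ := Hqp t + Hpp t * U t with hAdef
  have hvd : ∀ j, HasDerivAt (fun s => δq s j) ((A *ᵥ v) j) t :=
    hasDerivAt_pi.mp (hδq t)
  have hW' : ∀ i j, HasDerivAt (fun s => (U s - S s) i j) ((U' t - S' t) i j) t := by
    intro i j
    simpa [Matrix.sub_apply] using (hU' t i j).fun_sub (hS' t i j)
  -- derivative via product rule, in raw form
  have key : HasDerivAt (fun s => (U s - S s) *ᵥ (δq s) ⬝ᵥ δq s)
      (((U' t - S' t) *ᵥ v) ⬝ᵥ v + (W *ᵥ (A *ᵥ v)) ⬝ᵥ v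
        + (W *ᵥ v) ⬝ᵥ (A *ᵥ v)) t := by
    have hcomp : ∀ i, HasDerivAt (fun s => ((U s - S s) *ᵥ δq s) i)
        (((U' t - S' t) *ᵥ v) i + (W *ᵥ (A *ᵥ v)) i) t := by
      intro i
      have h := HasDerivAt.fun_sum (fun j (_ : j ∈ Finset.univ) =>
        ((hW' i j).fun_mul (hvd j)))
      refine h.congr_deriv ?_
      simp [mulVec, dotProduct, Finset.sum_add_distrib, hWdef, hv]
    have h := HasDerivAt.fun_sum (fun i (_ : i ∈ Finset.univ) =>
      (hcomp i).fun_mul (hvd i))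
    refine h.congr_deriv ?_
    simp [dotProduct, Finset.sum_add_distrib, add_mul, hv, hWdef]
  -- matrix identity
  have hWsymm : Wᵀ = W := by
    rw [hWdef, Matrix.transpose_sub, (hUsymm t).eq, (hSsymm t).eq]
  have hAT : Aᵀ = (Hqp t)ᵀ + U t * Hpp t := by
    rw [hAdef, Matrix.transpose_add, Matrix.transpose_mul, (hHppsymm t).eq, (hUsymm t).eq]
  have hU'eq : U' t = -(U t * Hpp t * U t + U t * Hqp t + (Hqp t)ᵀ * U t + Hqq t) := by
    have h := hUric t
    have h2 : U' t + (U t * Hpp t * U t + U t * Hqp t + (Hqp t)ᵀ * U t + Hqq t) = 0 := by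
      rw [← h]; abel
    exact eq_neg_of_add_eq_zero_left h2
  have hS'eq : S' t = -(S t * Hpp t * S t + S t * Hqp t + (Hqp t)ᵀ * S t + Hqq t) := by
    have h := hSric t
    have h2 : S' t + (S t * Hpp t * S t + S t * Hqp t + (Hqp t)ᵀ * S t + Hqq t) = 0 := by
      rw [← h]; abel
    exact eq_neg_of_add_eq_zero_left h2
  have hmat : (U' t - S' t) + W * A + Aᵀ * W = W * Hpp t * W := by
    rw [hU'eq, hS'eq, hAT, hWdef, hAdef]
    noncomm_ring
  -- identify derivatives
  have hDeq : ((U' t - S' t) *ᵥ v) ⬝ᵥ v + (W *ᵥ (A *ᵥ v)) ⬝ᵥ v + (W *ᵥ v) ⬝ᵥ (A *ᵥ v)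
      = (Hpp t *ᵥ (W *ᵥ v)) ⬝ᵥ (W *ᵥ v) := by
    have h3 : (W *ᵥ v) ⬝ᵥ (A *ᵥ v) = ((Aᵀ * W) *ᵥ v) ⬝ᵥ v := quadform_eq W A v
    have h2 : (W *ᵥ (A *ᵥ v)) ⬝ᵥ v = ((W * A) *ᵥ v) ⬝ᵥ v := by
      rw [Matrix.mulVec_mulVec]
    have hrhs : (Hpp t *ᵥ (W *ᵥ v)) ⬝ᵥ (W *ᵥ v) = ((W * Hpp t * W) *ᵥ v) ⬝ᵥ v := by
      rw [Matrix.mulVec_mulVec, quadform_eq (Hpp t * W) W v, hWsymm, Matrix.mul_assoc]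
    rw [h2, h3, hrhs, ← hmat, Matrix.add_mulVec, Matrix.add_mulVec,
      add_dotProduct, add_dotProduct]
  constructor
  · have := key
    rw [hDeq] at this
    exact this
  · intro h
    have h2 := h.dotProduct_mulVec_nonneg (W *ᵥ v)
    simpa [dotProduct_comm] using h2
end

section
/- Let 𝕊, 𝕌, S₀ be d×d real matrices with 𝕊, 𝕌 symmetric, S₀ symmetric positive definite, and S₀² = 𝕌 − 𝕊. Then the 2d×2d block matrix P = [[S₀⁻¹, S₀⁻¹], [𝕊·S₀⁻¹, 𝕌·S₀⁻¹]] is symplectic for the standard form, and its inverse is P⁻¹ = [[S₀⁻¹·𝕌, −S₀⁻¹], [−S₀⁻¹·𝕊, S₀⁻¹]]. -/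
open Matrix

theorem green_change_of_basis_symplectic {d : ℕ}
    (S U S₀ : Matrix (Fin d) (Fin d) ℝ)
    (hS : S.IsSymm) (hU : U.IsSymm) (hS₀ : S₀.PosDef)
    (hsq : S₀ * S₀ = U - S) :
    (Matrix.fromBlocks S₀⁻¹ S₀⁻¹ (S * S₀⁻¹) (U * S₀⁻¹))ᵀ *
        Matrix.fromBlocks 0 1 (-1) 0 *
        Matrix.fromBlocks S₀⁻¹ S₀⁻¹ (S * S₀⁻¹) (U * S₀⁻¹) =
      Matrix.fromBlocks 0 1 (-1) 0 ∧
    (Matrix.fromBlocks S₀⁻¹ S₀⁻¹ (S * S₀⁻¹) (U * S₀⁻¹))⁻¹ =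
      Matrix.fromBlocks (S₀⁻¹ * U) (-S₀⁻¹) (-(S₀⁻¹ * S)) S₀⁻¹ := by
  have hdet : IsUnit S₀.det := isUnit_iff_ne_zero.mpr hS₀.det_pos.ne'
  have h1 : S₀⁻¹ * S₀ = 1 := nonsing_inv_mul _ hdet
  have h2 : S₀ * S₀⁻¹ = 1 := mul_nonsing_inv _ hdet
  have hSsym : S₀ᵀ = S₀ := by
    have := hS₀.isHermitian
    simpa [Matrix.IsHermitian, conjTranspose_eq_transpose_of_trivial] using this
  have hIsym : (S₀⁻¹)ᵀ = S₀⁻¹ := by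
    rw [transpose_nonsing_inv, hSsym]
  -- key block computations
  have key : S₀⁻¹ * (U * S₀⁻¹) - S₀⁻¹ * (S * S₀⁻¹) = 1 := by
    have : S₀⁻¹ * ((U - S) * S₀⁻¹) = 1 := by
      rw [← hsq, ← mul_assoc, ← mul_assoc, h1, one_mul, h2]
    calc S₀⁻¹ * (U * S₀⁻¹) - S₀⁻¹ * (S * S₀⁻¹)
        = S₀⁻¹ * ((U - S) * S₀⁻¹) := by noncomm_ring
      _ = 1 := this
  constructor
  · rw [fromBlocks_transpose, fromBlocks_multiply, fromBlocks_multiply,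
      fromBlocks_inj]
    refine ⟨?_, ?_, ?_, ?_⟩ <;>
      simp only [mul_zero, zero_mul, mul_one, one_mul, zero_add, add_zero,
        mul_neg, neg_mul, mul_neg_one, transpose_mul, hIsym, hS.eq, hU.eq]
    · noncomm_ring
    · calc -(S₀⁻¹ * S * S₀⁻¹) + S₀⁻¹ * (U * S₀⁻¹)
          = S₀⁻¹ * (U * S₀⁻¹) - S₀⁻¹ * (S * S₀⁻¹) := by noncomm_ring
        _ = 1 := key
    · calc -(S₀⁻¹ * U * S₀⁻¹) + S₀⁻¹ * (S * S₀⁻¹)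
          = -(S₀⁻¹ * (U * S₀⁻¹) - S₀⁻¹ * (S * S₀⁻¹)) := by noncomm_ring
        _ = -1 := by rw [key]
    · noncomm_ring
  · -- inverse
    apply inv_eq_right_inv
    rw [fromBlocks_multiply]
    have hA : (U - S)⁻¹ = S₀⁻¹ * S₀⁻¹ := by
      rw [← hsq, Matrix.mul_inv_rev]
    have hAl : (U - S) * (S₀⁻¹ * S₀⁻¹) = 1 := by
      rw [← hsq]; rw [mul_assoc, ← mul_assoc S₀ S₀⁻¹, h2, one_mul, h2]
    have hAr : (S₀⁻¹ * S₀⁻¹) * (U - S) = 1 := by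
      rw [← hsq]; rw [mul_assoc, ← mul_assoc S₀⁻¹ S₀ S₀, h1, one_mul, h1]
    have tl : S₀⁻¹ * (S₀⁻¹ * U) + S₀⁻¹ * -(S₀⁻¹ * S) = 1 := by
      calc S₀⁻¹ * (S₀⁻¹ * U) + S₀⁻¹ * -(S₀⁻¹ * S)
          = (S₀⁻¹ * S₀⁻¹) * (U - S) := by noncomm_ring
        _ = 1 := hAr
    have tr : S₀⁻¹ * -S₀⁻¹ + S₀⁻¹ * S₀⁻¹ = 0 := by noncomm_ring
    have br : S * S₀⁻¹ * -S₀⁻¹ + U * S₀⁻¹ * S₀⁻¹ = 1 := by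
      calc S * S₀⁻¹ * -S₀⁻¹ + U * S₀⁻¹ * S₀⁻¹
          = (U - S) * (S₀⁻¹ * S₀⁻¹) := by noncomm_ring
        _ = 1 := hAl
    have bl : S * S₀⁻¹ * (S₀⁻¹ * U) + U * S₀⁻¹ * -(S₀⁻¹ * S) = 0 := by
      have hSU : S * (S₀⁻¹ * S₀⁻¹) * U - U * (S₀⁻¹ * S₀⁻¹) * S = 0 := by
        have h3 : S = U - (U - S) := (sub_sub_cancel U S).symm
        set A := S₀⁻¹ * S₀⁻¹
        calc S * A * U - U * A * S
            = (U - (U - S)) * A * U - U * A * (U - (U - S)) := by rw [← h3]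
          _ = U * A * U - (U - S) * A * U - (U * A * U - U * (A * (U - S))) := by
              noncomm_ring
          _ = 0 := by rw [hAl, hAr]; noncomm_ring
      calc S * S₀⁻¹ * (S₀⁻¹ * U) + U * S₀⁻¹ * -(S₀⁻¹ * S)
          = S * (S₀⁻¹ * S₀⁻¹) * U - U * (S₀⁻¹ * S₀⁻¹) * S := by noncomm_ring
        _ = 0 := hSU
    rw [tl, tr, bl, br, fromBlocks_one]
end

section
/- Consider the block tridiagonal symmetric matrix H of size (N−M+1)d with diagonal blocks a_M, …, a_N (symmetric d×d) and off-diagonal blocks b_M, …, b_{N−1} (each invertible d×d), so H((ζₙ))ₙ = ᵀb_{n−1}ζ_{n−1} + aₙζₙ + bₙζ_{n+1} (with ζ_{M−1} = ζ_{N+1} = 0). Suppose that for every M' ≤ M and N' ≥ N the analogously defined matrix H_{M',N'} (with blocks coming from fixed bi-infinite sequences (aₙ), (bₙ)) is positive semi-definite, and all bₙ are invertible. Then H = H_{M,N} is positive definite. -/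
open Matrix

/-- The quadratic form of the block tridiagonal matrix with diagonal blocks `a n` and
off-diagonal blocks `b n`, acting on sequences `ζ` (supported in `[M, N]`). -/
noncomputable def triQuad {d : ℕ} (a b : ℤ → Matrix (Fin d) (Fin d) ℝ) (M N : ℤ)
    (ζ : ℤ → Fin d → ℝ) : ℝ :=
  ∑ n ∈ Finset.Icc M N,
    ζ n ⬝ᵥ ((b (n - 1))ᵀ.mulVec (ζ (n - 1)) + (a n).mulVec (ζ n) + (b n).mulVec (ζ (n + 1)))

namespace BMaux
variable {d : ℕ}

/-- The "Jacobi operator" applied to a sequence. -/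
def L (a b : ℤ → Matrix (Fin d) (Fin d) ℝ) (ζ : ℤ → Fin d → ℝ) (n : ℤ) : Fin d → ℝ :=
  (b (n - 1))ᵀ.mulVec (ζ (n - 1)) + (a n).mulVec (ζ n) + (b n).mulVec (ζ (n + 1))

lemma triQuad_eq (a b : ℤ → Matrix (Fin d) (Fin d) ℝ) (M N : ℤ) (ζ : ℤ → Fin d → ℝ) :
    triQuad a b M N ζ = ∑ n ∈ Finset.Icc M N, ζ n ⬝ᵥ L a b ζ n := rfl

lemma dot_trans (A : Matrix (Fin d) (Fin d) ℝ) (u x : Fin d → ℝ) :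
    u ⬝ᵥ (Aᵀ.mulVec x) = x ⬝ᵥ (A.mulVec u) := by
  rw [dotProduct_mulVec, vecMul_transpose, dotProduct_comm]

lemma dot_trans' (A : Matrix (Fin d) (Fin d) ℝ) (u x : Fin d → ℝ) :
    u ⬝ᵥ (A.mulVec x) = x ⬝ᵥ (Aᵀ.mulVec u) := by
  conv_lhs => rw [← transpose_transpose A]
  exact dot_trans _ _ _

lemma shift_sum (f : ℤ → ℝ) (M N c : ℤ) :
    ∑ n ∈ Finset.Icc (M + c) (N + c), f n = ∑ n ∈ Finset.Icc M N, f (n + c) := by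
  rw [← Finset.map_add_right_Icc, Finset.sum_map]
  rfl

lemma L_comb (a b : ℤ → Matrix (Fin d) (Fin d) ℝ) (ζ η : ℤ → Fin d → ℝ) (t : ℝ) (n : ℤ) :
    L a b (fun m => ζ m + t • η m) n = L a b ζ n + t • L a b η n := by
  simp only [L, Matrix.mulVec_add, Matrix.mulVec_smul, smul_add]
  abel

/-- Enlarging the interval doesn't change the quadratic form for supported sequences. -/
lemma quad_mono (a b : ℤ → Matrix (Fin d) (Fin d) ℝ) {M N M' N' : ℤ}
    (h1 : M' ≤ M) (h2 : N ≤ N') (ζ : ℤ → Fin d → ℝ)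
    (hζ : ∀ n, n ∉ Finset.Icc M N → ζ n = 0) :
    triQuad a b M' N' ζ = triQuad a b M N ζ := by
  rw [triQuad_eq, triQuad_eq]
  exact (Finset.sum_subset (Finset.Icc_subset_Icc h1 h2)
    (fun n _ hn => by rw [hζ n hn, zero_dotProduct])).symm

/-- Symmetry of the bilinear form for sequences supported in `[M, N]`. -/
lemma bil_symm (a b : ℤ → Matrix (Fin d) (Fin d) ℝ) (ha : ∀ n, (a n).IsSymm)
    (M N : ℤ) (ζ η : ℤ → Fin d → ℝ)
    (hζ : ∀ n, n ∉ Finset.Icc M N → ζ n = 0) (hη : ∀ n, n ∉ Finset.Icc M N → η n = 0) :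
    ∑ n ∈ Finset.Icc M N, η n ⬝ᵥ L a b ζ n = ∑ n ∈ Finset.Icc M N, ζ n ⬝ᵥ L a b η n := by
  have hsplit : ∀ ζ' η' : ℤ → Fin d → ℝ,
      ∑ n ∈ Finset.Icc M N, η' n ⬝ᵥ L a b ζ' n
      = (∑ n ∈ Finset.Icc M N, η' n ⬝ᵥ (b (n-1))ᵀ.mulVec (ζ' (n-1)))
        + (∑ n ∈ Finset.Icc M N, η' n ⬝ᵥ (a n).mulVec (ζ' n))
        + (∑ n ∈ Finset.Icc M N, η' n ⬝ᵥ (b n).mulVec (ζ' (n+1))) := by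
    intro ζ' η'
    simp only [L, dotProduct_add, Finset.sum_add_distrib]
  rw [hsplit, hsplit]
  have hS2 : ∑ n ∈ Finset.Icc M N, η n ⬝ᵥ (a n).mulVec (ζ n)
      = ∑ n ∈ Finset.Icc M N, ζ n ⬝ᵥ (a n).mulVec (η n) := by
    refine Finset.sum_congr rfl fun n _ => ?_
    rw [dot_trans' (a n), (ha n).eq]
  -- S1 = T3
  have hS1 : ∑ n ∈ Finset.Icc M N, η n ⬝ᵥ (b (n-1))ᵀ.mulVec (ζ (n-1))
      = ∑ n ∈ Finset.Icc M N, ζ n ⬝ᵥ (b n).mulVec (η (n+1)) := by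
    have e1 : ∀ n : ℤ, η n ⬝ᵥ (b (n-1))ᵀ.mulVec (ζ (n-1))
        = ζ (n-1) ⬝ᵥ (b (n-1)).mulVec (η n) := fun n => dot_trans _ _ _
    simp only [e1]
    have key : ∑ n ∈ Finset.Icc M N, ζ (n-1) ⬝ᵥ (b (n-1)).mulVec (η n)
        = ∑ m ∈ Finset.Icc (M-1) (N-1), ζ m ⬝ᵥ (b m).mulVec (η (m+1)) := by
      have hs := shift_sum (fun n => ζ (n-1) ⬝ᵥ (b (n-1)).mulVec (η n)) (M-1) (N-1) 1
      simp only [sub_add_cancel, add_sub_cancel_right] at hs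
      exact hs
    rw [key]
    -- compare over common superset Icc (M-1) N
    have h1 : ∑ m ∈ Finset.Icc (M-1) (N-1), ζ m ⬝ᵥ (b m).mulVec (η (m+1))
        = ∑ m ∈ Finset.Icc (M-1) N, ζ m ⬝ᵥ (b m).mulVec (η (m+1)) := by
      refine Finset.sum_subset (Finset.Icc_subset_Icc le_rfl (by omega)) fun m hm hm' => ?_
      simp only [Finset.mem_Icc, not_and, not_le] at hm hm'
      have : η (m+1) = 0 := hη _ (by simp only [Finset.mem_Icc]; omega)
      rw [this, Matrix.mulVec_zero, dotProduct_zero]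
    have h2 : ∑ m ∈ Finset.Icc M N, ζ m ⬝ᵥ (b m).mulVec (η (m+1))
        = ∑ m ∈ Finset.Icc (M-1) N, ζ m ⬝ᵥ (b m).mulVec (η (m+1)) := by
      refine Finset.sum_subset (Finset.Icc_subset_Icc (by omega) le_rfl) fun m hm hm' => ?_
      simp only [Finset.mem_Icc, not_and, not_le] at hm hm'
      have : ζ m = 0 := hζ _ (by simp only [Finset.mem_Icc]; omega)
      rw [this, zero_dotProduct]
    rw [h1, ← h2]
  -- S3 = T1
  have hS3 : ∑ n ∈ Finset.Icc M N, η n ⬝ᵥ (b n).mulVec (ζ (n+1))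
      = ∑ n ∈ Finset.Icc M N, ζ n ⬝ᵥ (b (n-1))ᵀ.mulVec (η (n-1)) := by
    have e1 : ∀ n : ℤ, η n ⬝ᵥ (b n).mulVec (ζ (n+1))
        = ζ (n+1) ⬝ᵥ (b n)ᵀ.mulVec (η n) := fun n => dot_trans' _ _ _
    simp only [e1]
    have key : ∑ n ∈ Finset.Icc M N, ζ (n+1) ⬝ᵥ (b n)ᵀ.mulVec (η n)
        = ∑ m ∈ Finset.Icc (M+1) (N+1), ζ m ⬝ᵥ (b (m-1))ᵀ.mulVec (η (m-1)) := by
      have hs := shift_sum (fun m => ζ m ⬝ᵥ (b (m-1))ᵀ.mulVec (η (m-1))) M N 1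
      simp only [add_sub_cancel_right] at hs
      exact hs.symm
    rw [key]
    have h1 : ∑ m ∈ Finset.Icc (M+1) (N+1), ζ m ⬝ᵥ (b (m-1))ᵀ.mulVec (η (m-1))
        = ∑ m ∈ Finset.Icc M (N+1), ζ m ⬝ᵥ (b (m-1))ᵀ.mulVec (η (m-1)) := by
      refine Finset.sum_subset (Finset.Icc_subset_Icc (by omega) le_rfl) fun m hm hm' => ?_
      simp only [Finset.mem_Icc, not_and, not_le] at hm hm'
      have : η (m-1) = 0 := hη _ (by simp only [Finset.mem_Icc]; omega)
      rw [this, Matrix.mulVec_zero, dotProduct_zero]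
    have h2 : ∑ m ∈ Finset.Icc M N, ζ m ⬝ᵥ (b (m-1))ᵀ.mulVec (η (m-1))
        = ∑ m ∈ Finset.Icc M (N+1), ζ m ⬝ᵥ (b (m-1))ᵀ.mulVec (η (m-1)) := by
      refine Finset.sum_subset (Finset.Icc_subset_Icc le_rfl (by omega)) fun m hm hm' => ?_
      simp only [Finset.mem_Icc, not_and, not_le] at hm hm'
      have : ζ m = 0 := hζ _ (by simp only [Finset.mem_Icc]; omega)
      rw [this, zero_dotProduct]
    rw [h1, ← h2]
  rw [hS1, hS2, hS3]
  ring

/-- Expansion of the quadratic form along a perturbation. -/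
lemma quad_expand (a b : ℤ → Matrix (Fin d) (Fin d) ℝ) (M N : ℤ)
    (ζ η : ℤ → Fin d → ℝ) (t : ℝ) :
    triQuad a b M N (fun n => ζ n + t • η n)
      = triQuad a b M N ζ + t * (∑ n ∈ Finset.Icc M N, ζ n ⬝ᵥ L a b η n)
        + t * (∑ n ∈ Finset.Icc M N, η n ⬝ᵥ L a b ζ n) + t^2 * triQuad a b M N η := by
  rw [triQuad_eq]
  have e : ∀ n ∈ Finset.Icc M N,
      (ζ n + t • η n) ⬝ᵥ L a b (fun m => ζ m + t • η m) n
      = ζ n ⬝ᵥ L a b ζ n + t * (ζ n ⬝ᵥ L a b η n) + t * (η n ⬝ᵥ L a b ζ n)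
        + t^2 * (η n ⬝ᵥ L a b η n) := by
    intro n _
    rw [L_comb]
    simp only [add_dotProduct, dotProduct_add, smul_dotProduct, dotProduct_smul, smul_eq_mul]
    ring
  rw [Finset.sum_congr rfl e]
  simp only [Finset.sum_add_distrib, ← Finset.mul_sum, triQuad_eq]

lemma aux_zero (B C : ℝ) (hC : 0 ≤ C) (h : ∀ t : ℝ, 0 ≤ 2*t*B + t^2*C) : B = 0 := by
  by_contra hB
  have hC1 : (0:ℝ) < C + 1 := by linarith
  have h1 := h (-(B/(C+1)))
  have hB2 : 0 < B^2 := by positivity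
  have h2 : 0 ≤ (2 * -(B/(C+1)) * B + (-(B/(C+1)))^2 * C) * (C+1)^2 :=
    mul_nonneg h1 (by positivity)
  have h3 : (2 * -(B/(C+1)) * B + (-(B/(C+1)))^2 * C) * (C+1)^2
      = -(B^2) * (C + 2) * ((C+1) / (C+1)) ^ 2 := by field_simp; ring
  rw [div_self (ne_of_gt hC1)] at h3
  nlinarith

lemma isunit_mulVec_zero {A : Matrix (Fin d) (Fin d) ℝ} (hA : IsUnit A)
    {x : Fin d → ℝ} (h : A.mulVec x = 0) : x = 0 := by
  have hdet : IsUnit A.det := (Matrix.isUnit_iff_isUnit_det A).mp hA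
  calc x = (1 : Matrix (Fin d) (Fin d) ℝ).mulVec x := by rw [Matrix.one_mulVec]
    _ = (A⁻¹ * A).mulVec x := by rw [Matrix.nonsing_inv_mul A hdet]
    _ = A⁻¹.mulVec (A.mulVec x) := by rw [Matrix.mulVec_mulVec]
    _ = 0 := by rw [h, Matrix.mulVec_zero]

end BMaux

open BMaux in
theorem bialy_mackay_posdef {d : ℕ}
    (a b : ℤ → Matrix (Fin d) (Fin d) ℝ)
    (hasymm : ∀ n, (a n).IsSymm) (hb : ∀ n, IsUnit (b n))
    (M N : ℤ) (hMN : M ≤ N)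
    (hpsd : ∀ M' N', M' ≤ M → N ≤ N' →
      ∀ ζ : ℤ → Fin d → ℝ, (∀ n, n ∉ Finset.Icc M' N' → ζ n = 0) →
        0 ≤ triQuad a b M' N' ζ) :
    ∀ ζ : ℤ → Fin d → ℝ, (∀ n, n ∉ Finset.Icc M N → ζ n = 0) → ζ ≠ 0 →
      0 < triQuad a b M N ζ := by
  intro ζ hζ hne
  rcases (hpsd M N le_rfl le_rfl ζ hζ).lt_or_eq with h | h
  · exact h
  exfalso
  -- h : 0 = triQuad a b M N ζ; work on the enlarged interval E = Icc (M-1) (N+1)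
  have hζE : ∀ n, n ∉ Finset.Icc (M-1) (N+1) → ζ n = 0 := fun n hn => by
    refine hζ n fun hn' => hn ?_
    simp only [Finset.mem_Icc] at hn' ⊢; omega
  have hQE : triQuad a b (M-1) (N+1) ζ = 0 := by
    rw [quad_mono a b (by omega) (by omega) ζ hζ, ← h]
  -- kernel equations on E
  have hker : ∀ k ∈ Finset.Icc (M-1) (N+1), L a b ζ k = 0 := by
    intro k hk
    set v : Fin d → ℝ := L a b ζ k with hv
    set η : ℤ → Fin d → ℝ := fun m => if m = k then v else 0 with hη
    have hηsupp : ∀ n, n ∉ Finset.Icc (M-1) (N+1) → η n = 0 := by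
      intro n hn
      have : n ≠ k := fun e => hn (e ▸ hk)
      simp [hη, this]
    -- B = v ⬝ᵥ v
    have hB : ∑ n ∈ Finset.Icc (M-1) (N+1), η n ⬝ᵥ L a b ζ n = v ⬝ᵥ v := by
      rw [Finset.sum_eq_single_of_mem k hk]
      · simp [hη]; rfl
      · intro m _ hm
        simp [hη, hm]
    have hC : 0 ≤ triQuad a b (M-1) (N+1) η := hpsd _ _ (by omega) (by omega) η hηsupp
    have hsym := bil_symm a b hasymm (M-1) (N+1) ζ η hζE hηsupp
    have hall : ∀ t : ℝ, 0 ≤ 2 * t * (v ⬝ᵥ v) + t^2 * triQuad a b (M-1) (N+1) η := by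
      intro t
      have hsupp : ∀ n, n ∉ Finset.Icc (M-1) (N+1) → (fun m => ζ m + t • η m) n = 0 := by
        intro n hn
        simp [hζE n hn, hηsupp n hn]
      have := hpsd _ _ (by omega : M - 1 ≤ M) (by omega : N ≤ N + 1)
        (fun m => ζ m + t • η m) hsupp
      rw [quad_expand, hQE, ← hsym, hB] at this
      linarith
    have hBzero : v ⬝ᵥ v = 0 := aux_zero _ _ hC hall
    exact dotProduct_self_eq_zero.mp hBzero
  -- propagate zeros upward
  have hstep : ∀ n : ℤ, M - 1 ≤ n → ζ (n-1) = 0 → ζ n = 0 → ζ (n+1) = 0 := by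
    intro n hn h1 h2
    by_cases hle : n ≤ N + 1
    · have hk := hker n (Finset.mem_Icc.mpr ⟨hn, hle⟩)
      rw [L] at hk
      rw [h1, h2, Matrix.mulVec_zero, Matrix.mulVec_zero, zero_add, zero_add] at hk
      exact isunit_mulVec_zero (hb n) hk
    · exact hζ _ (by simp only [Finset.mem_Icc]; omega)
  have hzero : ∀ j : ℕ, ζ (M - 2 + j) = 0 ∧ ζ (M - 1 + j) = 0 := by
    intro j
    induction j with
    | zero =>
      constructor <;>
        · simp only [Nat.cast_zero, add_zero]
          exact hζ _ (by simp only [Finset.mem_Icc]; omega)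
    | succ j ih =>
      obtain ⟨ih1, ih2⟩ := ih
      have key : ζ (M - 1 + j + 1) = 0 := by
        refine hstep (M - 1 + j) (by omega) ?_ ih2
        have : M - 1 + (j:ℤ) - 1 = M - 2 + j := by ring
        rw [this]; exact ih1
      constructor
      · have : M - 2 + ((j:ℤ)+1) = M - 1 + j := by ring
        rw [Nat.cast_add, Nat.cast_one, this]; exact ih2
      · have : M - 1 + ((j:ℤ)+1) = M - 1 + j + 1 := by ring
        rw [Nat.cast_add, Nat.cast_one, this]; exact key
  apply hne
  funext m
  by_cases hm : M - 1 ≤ m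
  · have := (hzero (m - (M-1)).toNat).2
    have e : M - 1 + ((m - (M-1)).toNat : ℤ) = m := by omega
    rw [e] at this
    exact this
  · exact hζ _ (by simp only [Finset.mem_Icc]; omega)
end
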